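/- Let R be a commutative Noetherian ring of prime characteristic p > 0 and let I be an ideal of R. Then the weak 1-closure of I equals the integral closure of I; that is, x ∈ R satisfies (there exists c ∈ R° with c·x^q ∈ I^q for all sufficiently large powers q of p) if and only if there exists c ∈ R° with c·x^n ∈ I^n for all sufficiently large positive integers n. -/

import Mathlib

open Pointwise

/-- `R°`: the set of elements of `R` not contained in any minimal prime of `R`. -/
def RCirc (R : Type*) [CommRing R] : Set R :=
  {c | ∀ P ∈ minimalPrimes R, c ∉ P}

/-- The `q`-th Frobenius power `I^[q]` of an ideal `I`, generated by `q`-th powers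
of elements of `I`. -/
def frobPow {R : Type*} [CommRing R] (I : Ideal R) (q : ℕ) : Ideal R :=
  Ideal.span ((fun f => f ^ q) '' (I : Set R))

/-- The `(s,q)` mixed power `I^(s,q) = I^⌈sq⌉ + I^[q]`. -/
noncomputable def mixedPow {R : Type*} [CommRing R] (I : Ideal R) (s : ℝ) (q : ℕ) : Ideal R :=
  I ^ ⌈s * (q : ℝ)⌉₊ + frobPow I q

/-- The weak `s`-closure of `I`: elements `x` such that there is `c ∈ R°` with
`c·x^q ∈ I^(s,q)` for all sufficiently large powers `q = p^e` of `p`. -/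
def weakCl {R : Type*} [CommRing R] (p : ℕ) (I : Ideal R) (s : ℝ) : Set R :=
  {x | ∃ c ∈ RCirc R, ∃ N : ℕ, ∀ e : ℕ, N ≤ e → c * x ^ p ^ e ∈ mixedPow I s (p ^ e)}

/-- The tight closure `I*` of `I`. -/
def tightCl {R : Type*} [CommRing R] (p : ℕ) (I : Ideal R) : Set R :=
  {x | ∃ c ∈ RCirc R, ∃ N : ℕ, ∀ e : ℕ, N ≤ e → c * x ^ p ^ e ∈ frobPow I (p ^ e)}

/-- The integral closure of `I`: elements `x` such that there is `c ∈ R°` with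
`c·x^n ∈ I^n` for all sufficiently large `n`. -/
def intCl {R : Type*} [CommRing R] (I : Ideal R) : Set R :=
  {x | ∃ c ∈ RCirc R, ∃ N : ℕ, ∀ n : ℕ, N ≤ n → c * x ^ n ∈ I ^ n}

/-- The `α`-th rational power `I_α` of `I`, for rational `α = a/b ≥ 0`:
elements `x` with `x^b` in the integral closure of `I^a`. -/
noncomputable def ratPow {R : Type*} [CommRing R] (I : Ideal R) (α : ℚ) : Set R :=
  {x | x ^ α.den ∈ intCl (I ^ α.num.toNat)}

/-- `μ(I)`: the minimal number of generators of `I`. -/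
noncomputable def mu {R : Type*} [CommRing R] (I : Ideal R) : ℕ :=
  sInf {m : ℕ | ∃ s : Finset R, s.card = m ∧ Ideal.span (s : Set R) = I}

/-- An ideal has positive height if it is not contained in any minimal prime. -/
def PosHeight {R : Type*} [CommRing R] (I : Ideal R) : Prop :=
  ∀ P ∈ minimalPrimes R, ¬ I ≤ P

/- ============================ Auxiliary development ============================ -/

namespace WeakClAux

variable {R : Type*} [CommRing R]

/-- `J = I + (x)` -/
noncomputable def Jx (I : Ideal R) (x : R) : Ideal R := I + Ideal.span {x}

variable (I : Ideal R) (x : R)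

lemma Jx_def : Jx I x = I + Ideal.span {x} := rfl

lemma x_mem_Jx : x ∈ Jx I x := by
  rw [Jx_def, Submodule.add_eq_sup]
  exact Ideal.mem_sup_right (Ideal.mem_span_singleton_self x)

lemma I_le_Jx : I ≤ Jx I x := by
  rw [Jx_def, Submodule.add_eq_sup]; exact le_sup_left

/-- `u = x^(k+1) - y` with `y ∈ I·J^k`: `u` comes from an "integral-type" relation
for `x` over `I` of degree `k+1`. -/
def IsGd (k : ℕ) (u : R) : Prop := ∃ y ∈ I * (Jx I x) ^ k, u = x ^ (k+1) - y

lemma isGd_mul {a b : ℕ} {u v : R} (hu : IsGd I x a u) (hv : IsGd I x b v) :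
    IsGd I x (a + b + 1) (u * v) := by
  obtain ⟨y, hy, rfl⟩ := hu
  obtain ⟨z, hz, rfl⟩ := hv
  refine ⟨x ^ (a+1) * z + x ^ (b+1) * y - y * z, ?_, by ring⟩
  have h1 : x ^ (a+1) * z ∈ I * (Jx I x) ^ (a + b + 1) := by
    have := Ideal.mul_mem_mul (Ideal.pow_mem_pow (x_mem_Jx I x) (a+1)) hz
    have e : (Jx I x) ^ (a+1) * (I * (Jx I x) ^ b) = I * (Jx I x) ^ (a + b + 1) := by ring
    rwa [e] at this
  have h2 : x ^ (b+1) * y ∈ I * (Jx I x) ^ (a + b + 1) := by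
    have := Ideal.mul_mem_mul (Ideal.pow_mem_pow (x_mem_Jx I x) (b+1)) hy
    have e : (Jx I x) ^ (b+1) * (I * (Jx I x) ^ a) = I * (Jx I x) ^ (a + b + 1) := by ring
    rwa [e] at this
  have h3 : y * z ∈ I * (Jx I x) ^ (a + b + 1) := by
    have hm := Ideal.mul_mem_mul hy hz
    have e : (I * (Jx I x) ^ a) * (I * (Jx I x) ^ b) = I * (I * (Jx I x) ^ (a + b)) := by ring
    rw [e] at hm
    refine Ideal.mul_mono_right ?_ hm
    calc I * (Jx I x) ^ (a+b) ≤ (Jx I x) * (Jx I x) ^ (a+b) :=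
          Ideal.mul_mono_left (I_le_Jx I x)
      _ = (Jx I x) ^ (a + b + 1) := by ring
  exact Submodule.sub_mem _ (Submodule.add_mem _ h1 h2) h3

lemma isGd_pow {a : ℕ} {u : R} (h : IsGd I x a u) : ∀ t : ℕ, ∃ b, IsGd I x b (u ^ (t+1)) := by
  intro t
  induction t with
  | zero => exact ⟨a, by rwa [pow_one]⟩
  | succ t ih =>
    obtain ⟨b, hb⟩ := ih
    exact ⟨a + b + 1, by rw [pow_succ, mul_comm]; exact isGd_mul I x h hb⟩

lemma isGd_prod {ι : Type*} [DecidableEq ι] (g : ι → R) (kf : ι → ℕ) :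
    ∀ s : Finset ι, s.Nonempty → (∀ i ∈ s, IsGd I x (kf i) (g i)) →
      ∃ K, IsGd I x K (∏ i ∈ s, g i) := by
  intro s
  induction s using Finset.induction_on with
  | empty => intro hne; exact absurd hne (by simp)
  | @insert a s ha ih =>
    intro _ h
    by_cases hse : s.Nonempty
    · obtain ⟨K, hK⟩ := ih hse fun i hi => h i (Finset.mem_insert_of_mem hi)
      refine ⟨kf a + K + 1, ?_⟩
      rw [Finset.prod_insert ha]
      exact isGd_mul I x (h a (Finset.mem_insert_self a s)) hK
    · rw [Finset.not_nonempty_iff_eq_empty] at hse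
      subst hse
      refine ⟨kf a, ?_⟩
      rw [Finset.prod_insert (by simp), Finset.prod_empty, mul_one]
      exact h a (Finset.mem_insert_self a ∅)

lemma pow_le (k : ℕ) :
    (Jx I x) ^ (k+1) ≤ I * (Jx I x) ^ k + Ideal.span {x ^ (k+1)} := by
  induction k with
  | zero =>
    rw [zero_add, pow_one, pow_zero, mul_one, pow_one, Jx_def]
  | succ k ih =>
    have e1 : (Jx I x) ^ (k+1+1) = (Jx I x) ^ (k+1) * Jx I x := by ring
    rw [e1]
    refine le_trans (Ideal.mul_mono_left ih) ?_
    rw [add_mul]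
    simp only [Submodule.add_eq_sup]
    refine sup_le ?_ ?_
    · have e2 : I * Jx I x ^ k * Jx I x = I * Jx I x ^ (k+1) := by ring
      rw [e2]; exact le_sup_left
    · conv_lhs => rw [Jx_def]
      rw [mul_add]
      simp only [Submodule.add_eq_sup]
      refine sup_le ?_ ?_
      · refine le_trans ?_ (le_sup_left : _ ≤ I * Jx I x ^ (k+1) ⊔ _)
        rw [mul_comm]
        exact Ideal.mul_mono_right
          ((Ideal.span_singleton_le_iff_mem _).mpr (Ideal.pow_mem_pow (x_mem_Jx I x) (k+1)))
      · rw [Ideal.span_singleton_mul_span_singleton, ← pow_succ]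
        exact le_sup_right

lemma main_mem {I : Ideal R} {x : R} {k : ℕ} (hk : x ^ (k+1) ∈ I * (Jx I x) ^ k) (n : ℕ) :
    x ^ (k+1+n) ∈ I ^ (n+1) := by
  have base : ∀ m : ℕ, (Jx I x) ^ (k+1+m) ≤ I ^ (m+1) * (Jx I x) ^ k := by
    intro m
    induction m with
    | zero =>
      refine le_trans (pow_le I x k) ?_
      rw [pow_one]
      simp only [Submodule.add_eq_sup]
      exact sup_le le_rfl ((Ideal.span_singleton_le_iff_mem _).mpr hk)
    | succ m ih =>
      have e1 : (Jx I x) ^ (k+1+(m+1)) = (Jx I x) ^ (k+1+m) * Jx I x := by ring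
      rw [e1]
      refine le_trans (Ideal.mul_mono_left ih) ?_
      have e2 : I ^ (m+1) * (Jx I x) ^ k * Jx I x = I ^ (m+1) * (Jx I x) ^ (k+1) := by ring
      rw [e2]
      refine le_trans (Ideal.mul_mono_right (pow_le I x k)) ?_
      rw [mul_add]
      simp only [Submodule.add_eq_sup]
      refine sup_le ?_ ?_
      · have e3 : I ^ (m+1) * (I * Jx I x ^ k) = I ^ (m+1+1) * Jx I x ^ k := by ring
        rw [e3]
      · refine le_trans (Ideal.mul_mono_right
          ((Ideal.span_singleton_le_iff_mem _).mpr hk)) ?_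
        have e4 : I ^ (m+1) * (I * Jx I x ^ k) = I ^ (m+1+1) * Jx I x ^ k := by ring
        rw [e4]
  have hx : x ^ (k+1+n) ∈ (Jx I x) ^ (k+1+n) := Ideal.pow_mem_pow (x_mem_Jx I x) _
  exact Ideal.mul_le_left (base n hx)

/-- In a minimal prime, every element is "locally nilpotent": some multiple of a power
of it by an element outside the prime is zero. -/
lemma minimal_prime_ann {P : Ideal R} (hP : P ∈ minimalPrimes R) {x : R} (hx : x ∈ P) :
    ∃ s : ℕ, ∃ u : R, u ∉ P ∧ u * x ^ s = 0 := by
  haveI hPp : P.IsPrime := hP.1.1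
  set S := Localization.AtPrime P
  have hnil : algebraMap R S x ∈ nilradical S := by
    rw [nilradical_eq_sInf, Ideal.mem_sInf]
    rintro Q hQ
    haveI : Q.IsPrime := hQ
    have hd := (IsLocalization.isPrime_iff_isPrime_disjoint P.primeCompl S Q).mp hQ
    have hle : Ideal.comap (algebraMap R S) Q ≤ P := by
      intro r hr
      by_contra hrP
      exact Set.disjoint_left.mp hd.2 hrP hr
    have hPle : P ≤ Ideal.comap (algebraMap R S) Q := hP.2 ⟨hd.1, bot_le⟩ hle
    exact hPle hx
  obtain ⟨s, hs⟩ := mem_nilradical.mp hnil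
  rw [← map_pow] at hs
  obtain ⟨⟨u, hu⟩, hus⟩ := (IsLocalization.map_eq_zero_iff P.primeCompl S (x ^ s)).mp hs
  exact ⟨s, u, hu, hus⟩

open Polynomial in
/-- The key lemma in a Noetherian domain: if `c ≠ 0` and `c·x^{p^e} ∈ I^{p^e}` for all
large `e`, then `x` satisfies an integral-type equation over `I`. -/
lemma domain_key {R : Type*} [CommRing R] [IsDomain R] [IsNoetherianRing R]
    (I : Ideal R) (x c : R) (hc : c ≠ 0) (p N : ℕ) (hp : 1 < p)
    (h : ∀ e : ℕ, N ≤ e → c * x ^ p ^ e ∈ I ^ p ^ e) :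
    ∃ k : ℕ, x ^ (k + 1) ∈ I * (Jx I x) ^ k := by
  classical
  set A := reesAlgebra I with hA
  set q : ℕ → ℕ := fun e => p ^ (N + e) with hq
  have hmem : ∀ e : ℕ, (monomial (q e) (c * x ^ q e) : R[X]) ∈ A :=
    fun e => reesAlgebra.monomial_mem.mpr (h _ (Nat.le_add_right _ _))
  set a : ℕ → A := fun e => ⟨_, hmem e⟩ with ha
  set f : ℕ →o Ideal A :=
    ⟨fun m => Ideal.span (a '' Set.Iic m),
     fun m m' hmm' => Ideal.span_mono (Set.image_mono (Set.Iic_subset_Iic.mpr hmm'))⟩ with hf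
  obtain ⟨n0, hn0⟩ := monotone_stabilizes_iff_noetherian.mpr
    (inferInstance : IsNoetherian A A) f
  have hmemspan : a (n0 + 1) ∈ Ideal.span (a '' Set.Iic n0) := by
    have : a (n0 + 1) ∈ f (n0 + 1) :=
      Ideal.subset_span ⟨n0 + 1, Set.mem_Iic.mpr le_rfl, rfl⟩
    rwa [← hn0 (n0 + 1) (Nat.le_succ _)] at this
  have himg : a '' Set.Iic n0 = Set.range (fun i : Fin (n0 + 1) => a i) := by
    ext y
    constructor
    · rintro ⟨e, he, rfl⟩; exact ⟨⟨e, Nat.lt_succ_of_le he⟩, rfl⟩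
    · rintro ⟨i, rfl⟩; exact ⟨i, Nat.lt_succ_iff.mp i.2, rfl⟩
  rw [himg] at hmemspan
  obtain ⟨b, hb⟩ := (Submodule.mem_span_range_iff_exists_fun A).mp hmemspan
  have hsum := congrArg A.val hb
  rw [map_sum] at hsum
  simp only [smul_eq_mul, map_mul] at hsum
  have hlt : ∀ i : Fin (n0 + 1), q i < q (n0 + 1) := fun i =>
    Nat.pow_lt_pow_right hp (by omega)
  set β : Fin (n0 + 1) → R := fun i => (b i : R[X]).coeff (q (n0 + 1) - q i) with hβ
  have hco := congrArg (fun g : R[X] => g.coeff (q (n0 + 1))) hsum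
  simp only [finset_sum_coeff] at hco
  have hterm : ∀ i : Fin (n0 + 1),
      (A.val (b i) * A.val (a i)).coeff (q (n0 + 1)) = β i * (c * x ^ q i) := by
    intro i
    have e : q (n0 + 1) = (q (n0 + 1) - q i) + q i :=
      (Nat.sub_add_cancel (le_of_lt (hlt i))).symm
    show ((b i : R[X]) * monomial (q i) (c * x ^ q i)).coeff (q (n0 + 1)) = _
    conv_lhs => rw [e]
    rw [coeff_mul_monomial]
  rw [Finset.sum_congr rfl fun i _ => hterm i] at hco
  have hco2 : c * x ^ q (n0 + 1) = ∑ i, β i * (c * x ^ q i) := by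
    rw [hco]
    show _ = (monomial (q (n0+1)) (c * x ^ q (n0+1)) : R[X]).coeff (q (n0+1))
    rw [coeff_monomial]
    simp
  have key : x ^ q (n0 + 1) = ∑ i, β i * x ^ q i := by
    have h0 : c * (x ^ q (n0 + 1) - ∑ i, β i * x ^ q i) = 0 := by
      rw [mul_sub, Finset.mul_sum, sub_eq_zero, hco2]
      exact Finset.sum_congr rfl fun i _ => by ring
    rcases mul_eq_zero.mp h0 with h' | h'
    · exact absurd h' hc
    · exact sub_eq_zero.mp h'
  refine ⟨q (n0 + 1) - 1, ?_⟩
  have hq1 : 0 < q (n0 + 1) := Nat.pow_pos (by omega)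
  have e1 : q (n0 + 1) = (q (n0 + 1) - 1) + 1 := by omega
  rw [← e1, key]
  refine Submodule.sum_mem _ fun i _ => ?_
  have hβmem : β i ∈ I ^ (q (n0 + 1) - q i) := (mem_reesAlgebra_iff I _).mp (b i).2 _
  have h1 : β i ∈ I * (Jx I x) ^ (q (n0 + 1) - q i - 1) := by
    have hlti := hlt i
    have hle : I ^ (q (n0 + 1) - q ↑i) ≤ I * (Jx I x) ^ (q (n0 + 1) - q ↑i - 1) := by
      have e : q (n0 + 1) - q ↑i = (q (n0 + 1) - q ↑i - 1) + 1 := by omega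
      rw [e, pow_succ, mul_comm]
      exact Ideal.mul_mono_right (Ideal.pow_right_mono (I_le_Jx I x) _)
    exact hle hβmem
  have h2 := Ideal.mul_mem_mul h1 (Ideal.pow_mem_pow (x_mem_Jx I x) (q ↑i))
  have e2 : (I * (Jx I x) ^ (q (n0 + 1) - q ↑i - 1)) * (Jx I x) ^ (q ↑i)
      = I * (Jx I x) ^ (q (n0 + 1) - 1) := by
    rw [mul_assoc, ← pow_add]
    congr 2
    have hlti := hlt i
    omega
  rwa [e2] at h2

end WeakClAux

/-- the weak 1-closure of `I` equals the integral closure of `I`. -/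
theorem stmt1 {R : Type*} [CommRing R] [IsNoetherianRing R]
    (p : ℕ) (hp : p.Prime) (hcp : CharP R p) (I : Ideal R) :
    weakCl p I 1 = intCl I := by
  classical
  have hp1 : 1 < p := hp.one_lt
  have mixed : ∀ q : ℕ, mixedPow I (1:ℝ) q = I ^ q := by
    intro q
    have h1 : ⌈(1:ℝ) * (q:ℝ)⌉₊ = q := by rw [one_mul, Nat.ceil_natCast]
    rw [mixedPow, h1, Submodule.add_eq_sup, sup_eq_left, frobPow, Ideal.span_le]
    rintro y ⟨f, hf, rfl⟩
    exact Ideal.pow_mem_pow hf q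
  ext x
  simp only [weakCl, intCl, Set.mem_setOf_eq]
  constructor
  · rintro ⟨c, hc, N, hN⟩
    haveI : Nontrivial R := CharP.nontrivial_of_char_ne_one hp.ne_one
    have hN' : ∀ e, N ≤ e → c * x ^ p ^ e ∈ I ^ p ^ e := by
      intro e he
      have := hN e he
      rwa [mixed] at this
    -- Step 1: integral-type relations modulo each minimal prime
    have hstep : ∀ P ∈ minimalPrimes R, ∃ k u, WeakClAux.IsGd I x k u ∧ u ∈ P := by
      intro P hP
      haveI hPp : P.IsPrime := hP.1.1
      set π := Ideal.Quotient.mk P with hπ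
      have hcne : π c ≠ 0 := fun h0 => hc P hP (Ideal.Quotient.eq_zero_iff_mem.mp h0)
      have hmapped : ∀ e, N ≤ e → π c * (π x) ^ p ^ e ∈ (I.map π) ^ p ^ e := by
        intro e he
        rw [← map_pow, ← map_mul, ← Ideal.map_pow]
        exact Ideal.mem_map_of_mem π (hN' e he)
      obtain ⟨k, hk⟩ := WeakClAux.domain_key (I.map π) (π x) (π c) hcne p N hp1 hmapped
      have hJ : WeakClAux.Jx (I.map π) (π x) = (WeakClAux.Jx I x).map π := by
        rw [WeakClAux.Jx_def, WeakClAux.Jx_def, Submodule.add_eq_sup, Submodule.add_eq_sup,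
          Ideal.map_sup, Ideal.map_span, Set.image_singleton]
      rw [hJ, ← Ideal.map_pow, ← Ideal.map_mul, ← map_pow] at hk
      obtain ⟨y, hy, hyx⟩ :=
        (Ideal.mem_map_iff_of_surjective π Ideal.Quotient.mk_surjective).mp hk
      refine ⟨k, x ^ (k+1) - y, ⟨y, hy, rfl⟩, ?_⟩
      exact Ideal.Quotient.eq.mp hyx.symm
    -- Step 2: multiply and kill nilpotents to get x^(k+1) ∈ I·J^k in R itself
    have hstep' : ∀ P : Ideal R,
        ∃ k u, WeakClAux.IsGd I x k u ∧ (P ∈ minimalPrimes R → u ∈ P) := by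
      intro P
      by_cases hP : P ∈ minimalPrimes R
      · obtain ⟨k, u, h1, h2⟩ := hstep P hP
        exact ⟨k, u, h1, fun _ => h2⟩
      · exact ⟨0, x ^ 1 - 0, ⟨0, Submodule.zero_mem _, rfl⟩, fun h => absurd h hP⟩
    choose kf uf hGd humem using hstep'
    have hfin : (minimalPrimes R).Finite := minimalPrimes.finite_of_isNoetherianRing R
    set Fs : Finset (Ideal R) := hfin.toFinset with hFs
    have hFs_mem : ∀ P : Ideal R, P ∈ Fs ↔ P ∈ minimalPrimes R := fun P =>
      Set.Finite.mem_toFinset hfin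
    have hFs_ne : Fs.Nonempty := by
      obtain ⟨M, hM⟩ := Ideal.exists_maximal R
      haveI := hM.isPrime
      obtain ⟨P, hP, _⟩ := Ideal.exists_minimalPrimes_le (bot_le : (⊥ : Ideal R) ≤ M)
      exact ⟨P, (hFs_mem P).mpr hP⟩
    set z : R := ∏ P ∈ Fs, uf P with hz
    have hzP : ∀ P ∈ minimalPrimes R, z ∈ P := by
      intro P hP
      rw [hz, ← Finset.mul_prod_erase Fs uf ((hFs_mem P).mpr hP)]
      exact Ideal.mul_mem_right _ P (humem P hP)
    have hznil : ∃ t : ℕ, z ^ t = 0 := by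
      have : z ∈ sInf ((⊥ : Ideal R).minimalPrimes) :=
        Ideal.mem_sInf.mpr fun {J} hJ => hzP J hJ
      rw [Ideal.sInf_minimalPrimes] at this
      obtain ⟨n, hn⟩ := Ideal.mem_radical_iff.mp this
      exact ⟨n, by simpa using hn⟩
    obtain ⟨t, hzt⟩ := hznil
    rcases t with - | t
    · exact absurd (by simpa using hzt) (one_ne_zero (α := R))
    obtain ⟨K1, hK1⟩ := WeakClAux.isGd_prod I x uf kf Fs hFs_ne fun P _ => hGd P
    obtain ⟨K2, hK2⟩ := WeakClAux.isGd_pow I x hK1 t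
    rw [hzt] at hK2
    obtain ⟨y, hy, hy0⟩ := hK2
    have hxmem : x ^ (K2 + 1) ∈ I * (WeakClAux.Jx I x) ^ K2 := by
      rw [sub_eq_zero.mp hy0.symm]
      exact hy
    -- Step 3: annihilator elements for the minimal primes containing x
    have hann : ∀ P : Ideal R, ∃ s u',
        (P ∈ minimalPrimes R → x ∈ P → (u' ∉ P ∧ u' * x ^ s = 0)) := by
      intro P
      by_cases hP : P ∈ minimalPrimes R ∧ x ∈ P
      · obtain ⟨s, u', hu, he⟩ := WeakClAux.minimal_prime_ann hP.1 hP.2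
        exact ⟨s, u', fun _ _ => ⟨hu, he⟩⟩
      · exact ⟨0, 0, fun h1 h2 => absurd ⟨h1, h2⟩ hP⟩
    choose sf af haf using hann
    have hvex : ∀ P : Ideal R,
        ∃ v, (P ∈ minimalPrimes R → (v ∈ ∏ Q ∈ Fs.erase P, Q) ∧ v ∉ P) := by
      intro P
      by_cases hP : P ∈ minimalPrimes R
      · haveI hPp : P.IsPrime := hP.1.1
        have hnle : ¬ ((∏ Q ∈ Fs.erase P, Q) ≤ P) := by
          rw [Ideal.IsPrime.prod_le hPp]
          rintro ⟨Q, hQe, hQle⟩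
          have hQne : Q ≠ P := Finset.ne_of_mem_erase hQe
          have hQmin : Q ∈ minimalPrimes R := (hFs_mem Q).mp (Finset.mem_of_mem_erase hQe)
          exact hQne (le_antisymm hQle (hP.2 ⟨hQmin.1.1, bot_le⟩ hQle))
        obtain ⟨v, hv1, hv2⟩ := SetLike.not_le_iff_exists.mp hnle
        exact ⟨v, fun _ => ⟨hv1, hv2⟩⟩
      · exact ⟨0, fun h => absurd h hP⟩
    choose vf hvf using hvex
    set s0 : ℕ := Fs.sup sf with hs0
    set Tx : Finset (Ideal R) := Fs.filter (fun P => x ∈ P) with hTx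
    set w : R := ∑ P ∈ Tx, af P * vf P with hw
    -- facts about w
    have hterm_mem : ∀ P, P ∈ minimalPrimes R → ∀ Q ∈ Tx, Q ≠ P → af Q * vf Q ∈ P := by
      intro P hP Q hQ hne
      have hQmin : Q ∈ minimalPrimes R := (hFs_mem Q).mp (Finset.mem_of_mem_filter Q hQ)
      have hPe : P ∈ Fs.erase Q :=
        Finset.mem_erase.mpr ⟨fun h => hne h.symm, (hFs_mem P).mpr hP⟩
      have hle : (∏ Q' ∈ Fs.erase Q, Q') ≤ P :=
        le_trans Ideal.prod_le_inf (Finset.inf_le hPe)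
      exact Ideal.mul_mem_left _ _ (hle ((hvf Q hQmin).1))
    have hw_ann : ∀ n, s0 ≤ n → w * x ^ n = 0 := by
      intro n hn
      rw [hw, Finset.sum_mul]
      refine Finset.sum_eq_zero fun P hP => ?_
      have hPmin : P ∈ minimalPrimes R := (hFs_mem P).mp (Finset.mem_of_mem_filter P hP)
      have hxP : x ∈ P := (Finset.mem_filter.mp hP).2
      have hsle : sf P ≤ n := le_trans (Finset.le_sup ((hFs_mem P).mpr hPmin)) hn
      have e : af P * vf P * x ^ n = (af P * x ^ sf P) * (vf P * x ^ (n - sf P)) := by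
        rw [mul_mul_mul_comm, ← pow_add]
        congr 2
        omega
      rw [e, (haf P hPmin hxP).2, zero_mul]
    have hw_in : ∀ P ∈ minimalPrimes R, x ∉ P → w ∈ P := by
      intro P hP hxP
      refine Submodule.sum_mem _ fun Q hQ => ?_
      have hxQ : x ∈ Q := (Finset.mem_filter.mp hQ).2
      exact hterm_mem P hP Q hQ (fun h => hxP (h ▸ hxQ))
    have hw_nin : ∀ P ∈ minimalPrimes R, x ∈ P → w ∉ P := by
      intro P hP hxP hwP
      haveI hPp : P.IsPrime := hP.1.1
      have hPT : P ∈ Tx := Finset.mem_filter.mpr ⟨(hFs_mem P).mpr hP, hxP⟩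
      have hrest : (∑ Q ∈ Tx.erase P, af Q * vf Q) ∈ P :=
        Submodule.sum_mem _ fun Q hQ =>
          hterm_mem P hP Q (Finset.mem_of_mem_erase hQ) (Finset.ne_of_mem_erase hQ)
      have hwsplit : af P * vf P + ∑ Q ∈ Tx.erase P, af Q * vf Q
          = ∑ Q ∈ Tx, af Q * vf Q :=
        Finset.add_sum_erase Tx (fun Q => af Q * vf Q) hPT
      have : af P * vf P ∈ P := by
        rw [hw] at hwP
        have h2 := Submodule.sub_mem P hwP hrest
        rwa [← hwsplit, add_sub_cancel_right] at h2
      rcases hPp.mem_or_mem this with h' | h'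
      · exact (haf P hP hxP).1 h'
      · exact (hvf P hP).2 h'
    -- final constant
    set emax : ℕ := max N (K2 + 2) with hemax
    set q : ℕ := p ^ emax with hqdef
    have hqN : c * x ^ q ∈ I ^ q := hN' emax (le_max_left _ _)
    have hqk : K2 + 2 ≤ q := le_trans (le_max_right N (K2+2))
      (le_trans (Nat.le_succ _) (Nat.lt_pow_self (n := emax) hp1))
    have hq0 : 0 < q := by omega
    refine ⟨c * x ^ q + w, ?_, K2 + 1 + s0, ?_⟩
    · -- membership in R°
      intro P hP hmem
      haveI hPp : P.IsPrime := hP.1.1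
      by_cases hxP : x ∈ P
      · have hcx : c * x ^ q ∈ P :=
          Ideal.mul_mem_left _ _ (Ideal.pow_mem_of_mem P hxP q hq0)
        have : w ∈ P := by
          have := Submodule.sub_mem P hmem hcx
          rwa [add_sub_cancel_left] at this
        exact hw_nin P hP hxP this
      · have hcxn : c * x ^ q ∉ P := by
          intro h'
          rcases hPp.mem_or_mem h' with h'' | h''
          · exact hc P hP h''
          · exact hxP (hPp.mem_of_pow_mem _ h'')
        have : c * x ^ q ∈ P := by
          have := Submodule.sub_mem P hmem (hw_in P hP hxP)
          rwa [add_sub_cancel_right] at this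
        exact hcxn this
    · -- the membership c'' x^n ∈ I^n for n ≥ K2+1+s0
      intro n hn
      have hxn : x ^ n ∈ I ^ (n - (K2 + 1) + 1) := by
        have := WeakClAux.main_mem hxmem (n - (K2 + 1))
        have e : K2 + 1 + (n - (K2 + 1)) = n := by omega
        rwa [e] at this
      have hsn : w * x ^ n = 0 := hw_ann n (by omega)
      have : (c * x ^ q + w) * x ^ n = (c * x ^ q) * x ^ n := by
        rw [add_mul, hsn, add_zero]
      rw [this]
      have hmm := Ideal.mul_mem_mul hqN hxn
      rw [← pow_add] at hmm
      have : (c * x ^ q) * x ^ n = c * x ^ q * x ^ n := rfl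
      refine Ideal.pow_le_pow_right ?_ hmm
      omega
  · rintro ⟨c, hc, N, hN⟩
    refine ⟨c, hc, N, fun e he => ?_⟩
    rw [mixed]
    exact hN _ (le_trans he (Nat.lt_pow_self (n := e) hp1).le)
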